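/- Let l, r ≥ 0 be integers with r + 1 ≤ l ≤ r + 2, and let λ₀ be as in the context. Let p : ℂ → ℂ be a polynomial for which there exists ε₀ > 0 such that |p(z)| ≤ 1 for all z ∈ ℂ with |z| < ε₀ and Re z < 0. Then there exists α₀ > 0, depending only on l, r and ε₀, such that for every μ > 0 with α₀·μ < 1 one has |p(μ·λ₀(e^{iθ}))| ≤ 1 for all 0 < θ < 2π. (Hence the corresponding fully-discretized method for the advection equation is stable under the Courant condition α₀·δt/h < 1.) -/

import Mathlib

/-- Optimal finite-difference coefficients for the first derivative on the
stencil `{-l, …, r}`. -/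
noncomputable def aCoef (l r : ℕ) (k : ℤ) : ℝ :=
  if k = 0 then
    -∑ ν ∈ (Finset.Icc (-(l : ℤ)) (r : ℤ)).erase 0, (1 : ℝ) / (ν : ℝ)
  else
    -((-1 : ℝ) ^ k / (k : ℝ)) *
      ((Nat.factorial l * Nat.factorial r : ℕ) : ℝ) /
      ((Nat.factorial ((l : ℤ) + k).toNat * Nat.factorial ((r : ℤ) - k).toNat : ℕ) : ℝ)

/-- The symbol `λ₀(s) = -Σ_{k=-l}^{r} a_k s^k` of the advection discretization. -/
noncomputable def lam0 (l r : ℕ) (s : ℂ) : ℂ :=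
  -∑ k ∈ Finset.Icc (-(l : ℤ)) (r : ℤ), (aCoef l r k : ℂ) * s ^ k

lemma Icc_eq_map (l r : ℕ) : Finset.Icc (-(l:ℤ)) (r:ℤ) =
    (Finset.range (l+r+1)).map ⟨fun j : ℕ => (j:ℤ) - l, show Function.Injective _ from fun a b h => by simpa using h⟩ := by
  ext x
  simp only [Finset.mem_Icc, Finset.mem_map, Finset.mem_range, Function.Embedding.coeFn_mk]
  constructor
  · rintro ⟨hx1, hx2⟩
    exact ⟨(x + l).toNat, by omega, by omega⟩
  · rintro ⟨j, hj, rfl⟩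
    omega

lemma neg_one_zpow_sub (j l : ℕ) : (-1:ℝ)^((j:ℤ)-(l:ℤ)) = (-1:ℝ)^(j+l) := by
  have h : ((j:ℤ) - l) = ((j+l : ℕ) : ℤ) - ((2*l : ℕ) : ℤ) := by push_cast; ring
  rw [h, zpow_sub₀ (by norm_num : (-1:ℝ) ≠ 0), zpow_natCast, zpow_natCast,
    pow_mul, neg_one_sq, one_pow, div_one]

lemma aCoef_off (l r j : ℕ) (hj : j ≤ l + r) (hjl : j ≠ l) :
    ((j:ℝ) - l) * aCoef l r ((j:ℤ) - l) =
      -(-1:ℝ)^(j+l) * (l.factorial * r.factorial) /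
        (j.factorial * (l+r-j).factorial) := by
  have hk : ((j:ℤ) - l) ≠ 0 := by omega
  have h1 : ((l:ℤ) + ((j:ℤ) - l)).toNat = j := by omega
  have h2 : ((r:ℤ) - ((j:ℤ) - l)).toNat = l + r - j := by omega
  have hkr : ((j:ℝ) - l) ≠ 0 := by
    intro h
    exact hjl (by exact_mod_cast sub_eq_zero.mp h)
  rw [aCoef, if_neg hk, h1, h2, neg_one_zpow_sub]
  push_cast
  field_simp

lemma cancel_help (A B C D X Y : ℂ) (hB : B ≠ 0) :
    -(A / (B * C * D) * Y) * (B * X) = -(A / (C * D)) * (X * Y) := by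
  field_simp

lemma sum_choose_neg (n : ℕ) (s : ℂ) :
    ∑ j ∈ Finset.range (n+1), (n.choose j : ℂ) * (-s)^j = (1-s)^n := by
  rw [sub_eq_add_neg, add_comm (1:ℂ) (-s), add_pow]
  simp [mul_comm]

lemma key_deriv_sum (l r : ℕ) (s : ℂ) (hs : s ≠ 0) :
    ∑ k ∈ Finset.Icc (-(l:ℤ)) (r:ℤ), (k:ℂ) * (aCoef l r k : ℂ) * s^k
      = 1 - (-1:ℂ)^l * ((l.factorial * r.factorial : ℕ) : ℂ) / ((l+r).factorial : ℂ)
          * s^(-(l:ℤ)) * (1-s)^(l+r) := by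
  have hfac : ∀ m : ℕ, ((m.factorial : ℂ)) ≠ 0 := fun m => by
    exact_mod_cast Nat.cast_ne_zero.mpr m.factorial_pos.ne'
  rw [Icc_eq_map, Finset.sum_map]
  simp only [Function.Embedding.coeFn_mk]
  have step : ∀ j ∈ Finset.range (l+r+1),
      (((j:ℤ) - l : ℤ) : ℂ) * (aCoef l r ((j:ℤ) - l) : ℂ) * s^((j:ℤ) - l)
        = (if j = l then 1 else 0) +
          -((-1:ℂ)^l * ((l.factorial * r.factorial : ℕ) : ℂ) / ((l+r).factorial : ℂ)
            * s^(-(l:ℤ))) * ((((l+r).choose j : ℕ) : ℂ) * (-s)^j) := by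
    intro j hj
    rw [Finset.mem_range] at hj
    have hjn : j ≤ l + r := by omega
    have hchoose : ((l+r).factorial : ℂ)
        = ((l+r).choose j : ℂ) * (j.factorial : ℂ) * ((l+r-j).factorial : ℂ) := by
      exact_mod_cast congrArg (Nat.cast : ℕ → ℂ)
        (Nat.choose_mul_factorial_mul_factorial hjn).symm
    have hspow : s^((j:ℤ) - l) = s^j * s^(-(l:ℤ)) := by
      rw [sub_eq_add_neg, zpow_add₀ hs, zpow_natCast]
    have hsinv : s^(-(l:ℤ)) * s^(l:ℕ) = 1 := by
      rw [← zpow_natCast s l, ← zpow_add₀ hs]; simp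
    have hsneg : s^(-(l:ℤ)) = (s^(l:ℕ))⁻¹ := by rw [zpow_neg, zpow_natCast]
    have hCne : (((l+r).choose j : ℕ) : ℂ) ≠ 0 := by
      exact_mod_cast Nat.cast_ne_zero.mpr (Nat.choose_pos hjn).ne'
    have hsl : (s:ℂ)^(l:ℕ) ≠ 0 := pow_ne_zero _ hs
    by_cases hjl : j = l
    · have hz : (((j:ℤ) - l : ℤ) : ℂ) = 0 := by rw [hjl]; simp
      rw [hz, zero_mul, zero_mul, if_pos hjl, hjl, hsneg, hchoose, hjl, neg_pow s]
      have hlr : l + r - l = r := by omega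
      rw [hlr]
      have hCl : (((l+r).choose l : ℕ) : ℂ) ≠ 0 := by
        exact_mod_cast Nat.cast_ne_zero.mpr (Nat.choose_pos (Nat.le_add_right l r)).ne'
      have hone : ((l.factorial * r.factorial : ℕ) : ℂ) /
          ((((l + r).choose l : ℕ) : ℂ) * (l.factorial : ℂ) * (r.factorial : ℂ)) * ((s ^ l)⁻¹) *
          ((((l+r).choose l : ℕ) : ℂ) * s^l) = 1 := by
        rw [mul_assoc, mul_comm ((((l+r).choose l : ℕ):ℂ)) (s^l), ← mul_assoc (s^l)⁻¹,
          inv_mul_cancel₀ hsl, one_mul, div_mul_eq_mul_div,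
          div_eq_one_iff_eq (by exact mul_ne_zero (mul_ne_zero hCl (hfac l)) (hfac r))]
        push_cast
        ring
      rcases Nat.even_or_odd l with hl | hl <;>
        rw [hl.neg_one_pow] <;> linear_combination hone
    · rw [if_neg hjl]
      have hA : (((j:ℤ) - l : ℤ) : ℂ) * (aCoef l r ((j:ℤ) - l) : ℂ)
          = Complex.ofReal (-(-1:ℝ)^(j+l) * (l.factorial * r.factorial) /
              (j.factorial * (l+r-j).factorial)) := by
        rw [← aCoef_off l r j hjn hjl]
        push_cast
        ring
      rw [hA]
      push_cast
      rw [hspow, hchoose, hsneg, neg_pow s, pow_add]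
      rw [cancel_help _ _ _ _ _ _ hCne]
      ring
  rw [Finset.sum_congr rfl step, Finset.sum_add_distrib]
  rw [Finset.sum_ite_eq' (Finset.range (l+r+1)) l (fun _ => (1:ℂ))]
  rw [if_pos (by simp), ← Finset.mul_sum, sum_choose_neg]
  ring

noncomputable def hsum (m : ℕ) : ℝ := ∑ i ∈ Finset.range m, (1:ℝ)/(i+1)

lemma hsum_succ (m : ℕ) : hsum (m+1) = hsum m + 1/((m:ℝ)+1) := by
  rw [hsum, Finset.sum_range_succ, hsum]

lemma alt_sum_real (n : ℕ) :
    ∑ m ∈ Finset.range (n+1), (-1:ℝ)^m * ((n.choose m : ℕ):ℝ) = if n = 0 then 1 else 0 := by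
  have h := Int.alternating_sum_range_choose (n := n)
  have h2 : ∑ m ∈ Finset.range (n+1), (-1:ℝ)^m * ((n.choose m : ℕ):ℝ)
      = ((∑ m ∈ Finset.range (n+1), (-1:ℤ)^m * (n.choose m : ℤ) : ℤ) : ℝ) := by
    push_cast; rfl
  rw [h2, h]
  split <;> simp

lemma alt_choose_succ_sum (n : ℕ) :
    ∑ i ∈ Finset.range (n+1), (-1:ℝ)^i * (((n+1).choose (i+1) : ℕ):ℝ) = 1 := by
  have h := alt_sum_real (n+1)
  rw [if_neg (Nat.succ_ne_zero n)] at h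
  rw [Finset.sum_range_succ'] at h
  simp only [pow_succ, pow_zero, one_mul, Nat.choose_zero_right, Nat.cast_one] at h
  have h3 : ∑ i ∈ Finset.range (n+1), (-1:ℝ)^i * (-1) * (((n+1).choose (i+1) : ℕ):ℝ) = -1 := by
    linarith
  calc ∑ i ∈ Finset.range (n+1), (-1:ℝ)^i * (((n+1).choose (i+1) : ℕ):ℝ)
      = -∑ i ∈ Finset.range (n+1), (-1:ℝ)^i * (-1) * (((n+1).choose (i+1) : ℕ):ℝ) := by
        rw [← Finset.sum_neg_distrib]
        exact Finset.sum_congr rfl fun i _ => by ring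
    _ = 1 := by rw [h3]; norm_num

lemma alt_harmonic (l : ℕ) :
    ∑ j ∈ Finset.range (l+1), (if j = 0 then 0 else (-1:ℝ)^(j+1) * ((l.choose j : ℕ):ℝ) / j)
      = hsum l := by
  induction l with
  | zero => simp [hsum]
  | succ n ih =>
    have split : ∀ j ∈ Finset.range (n+2),
        (if j = 0 then (0:ℝ) else (-1:ℝ)^(j+1) * (((n+1).choose j : ℕ):ℝ) / j)
          = (if j = 0 then (0:ℝ) else (-1:ℝ)^(j+1) * ((n.choose j : ℕ):ℝ) / j)
            + (if j = 0 then (0:ℝ) else (-1:ℝ)^(j+1) * ((n.choose (j-1) : ℕ):ℝ) / j) := by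
      intro j _
      by_cases hj0 : j = 0
      · simp [hj0]
      · rw [if_neg hj0, if_neg hj0, if_neg hj0]
        obtain ⟨i, rfl⟩ : ∃ i, j = i + 1 := ⟨j-1, by omega⟩
        rw [Nat.choose_succ_succ, Nat.add_sub_cancel]
        push_cast
        ring
    rw [Finset.sum_congr rfl split, Finset.sum_add_distrib]
    have e1 : ∑ j ∈ Finset.range (n+2),
        (if j = 0 then (0:ℝ) else (-1:ℝ)^(j+1) * ((n.choose j : ℕ):ℝ) / j) = hsum n := by
      rw [Finset.sum_range_succ]
      simpa [Nat.choose_succ_self] using ih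
    have e2 : ∑ j ∈ Finset.range (n+2),
        (if j = 0 then (0:ℝ) else (-1:ℝ)^(j+1) * ((n.choose (j-1) : ℕ):ℝ) / j)
          = 1/((n:ℝ)+1) := by
      rw [Finset.sum_range_succ']
      have key : ∀ i ∈ Finset.range (n+1),
          (if i + 1 = 0 then (0:ℝ) else (-1:ℝ)^(i+1+1) * ((n.choose (i+1-1) : ℕ):ℝ) / ((i+1 : ℕ):ℝ))
            = (-1:ℝ)^i * (((n+1).choose (i+1) : ℕ):ℝ) / ((n:ℝ)+1) := by
        intro i _
        rw [if_neg (Nat.succ_ne_zero i)]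
        simp only [Nat.add_sub_cancel]
        have hcr : ((n:ℝ)+1) * ((n.choose i : ℕ):ℝ) = (((n+1).choose (i+1) : ℕ):ℝ) * ((i:ℝ)+1) := by
          exact_mod_cast Nat.add_one_mul_choose_eq n i
        have hi1 : ((i:ℝ)+1) ≠ 0 := by positivity
        have hn1 : ((n:ℝ)+1) ≠ 0 := by positivity
        have h2 : (-1:ℝ)^(i+1+1) = (-1)^i := by ring
        rw [h2]
        have hc1 : ((i+1 : ℕ):ℝ) = (i:ℝ)+1 := by push_cast; ring
        rw [hc1, div_eq_div_iff hi1 hn1]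
        linear_combination ((-1:ℝ)^i) * hcr
      rw [Finset.sum_congr rfl key, if_pos rfl, add_zero, ← Finset.sum_div,
        alt_choose_succ_sum]
    rw [e1, e2, hsum_succ]

noncomputable def tif (l r j : ℕ) : ℝ :=
  if j = l then 0 else
    ((-1:ℝ)^(j+l) * ((l.factorial : ℝ) * (r.factorial : ℝ)) /
      ((j.factorial : ℝ) * ((l+r-j).factorial : ℝ))) / ((j:ℝ) - l)

lemma neg_one_pow_refl (l i : ℕ) (h : i ≤ 2*l) : (-1:ℝ)^(2*l - i) = (-1:ℝ)^i := by
  rcases Nat.even_or_odd i with hi | hi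
  · rw [hi.neg_one_pow,
      (((Nat.even_sub h).mpr (iff_of_true (even_two_mul l) hi)).neg_one_pow)]
  · rw [hi.neg_one_pow, ((Nat.Even.sub_odd h (even_two_mul l) hi).neg_one_pow)]

lemma facR_ne (m : ℕ) : ((m.factorial : ℕ) : ℝ) ≠ 0 := by
  exact_mod_cast Nat.cast_ne_zero.mpr m.factorial_pos.ne'

lemma T_eq (l r : ℕ) : ∑ j ∈ Finset.range (l+r+1), tif l r j = hsum l - hsum r := by
  induction r with
  | zero =>
    rw [← Finset.sum_range_reflect]
    have claim : ∀ i ∈ Finset.range (l+0+1), tif l 0 (l+0+1-1-i)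
        = (if i = 0 then 0 else (-1:ℝ)^(i+1) * ((l.choose i : ℕ):ℝ)/i) := by
      intro i hi
      rw [Finset.mem_range] at hi
      have hil : i ≤ l := by omega
      have hj : l + 0 + 1 - 1 - i = l - i := by omega
      rw [hj]
      by_cases hi0 : i = 0
      · simp [hi0, tif]
      · rw [tif, if_neg (by omega), if_neg hi0]
        have hfact : ((l.factorial : ℕ):ℝ)
            = ((l.choose i : ℕ):ℝ) * ((i.factorial : ℕ):ℝ) * (((l-i).factorial : ℕ):ℝ) := by
          exact_mod_cast congrArg (Nat.cast : ℕ → ℝ)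
            (Nat.choose_mul_factorial_mul_factorial hil).symm
        have h4 : l + 0 - (l - i) = i := by omega
        have h5 : (l - i) + l = 2*l - i := by omega
        rw [h4, h5, neg_one_pow_refl l i (by omega), hfact]
        have hcast : (((l-i : ℕ)):ℝ) = (l:ℝ) - i := by
          push_cast [Nat.cast_sub hil]; ring
        rw [hcast, Nat.factorial_zero]
        have hi1 : ((i:ℝ)) ≠ 0 := by
          exact_mod_cast hi0
        have hli : (l:ℝ) - i - l ≠ 0 := by
          intro hcon; apply hi1; linarith
        field_simp
        ring
    rw [Finset.sum_congr rfl claim, alt_harmonic]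
    simp [hsum]
  | succ m ih =>
    have hstep : ∀ j ∈ Finset.range (l+m+1), tif l (m+1) j = tif l m j +
        (if j = l then 0 else (-1:ℝ)^(j+l) * ((l.factorial : ℝ) * (m.factorial : ℝ)) /
          ((j.factorial : ℝ) * ((l+m+1-j).factorial : ℝ))) := by
      intro j hj
      rw [Finset.mem_range] at hj
      by_cases hjl : j = l
      · simp [hjl, tif]
      · rw [tif, tif, if_neg hjl, if_neg hjl, if_neg hjl]
        have h1 : l + (m+1) - j = (l+m-j)+1 := by omega
        have h2 : l + m + 1 - j = (l+m-j)+1 := by omega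
        rw [h1, h2, Nat.factorial_succ, Nat.factorial_succ]
        have hcast : (((l+m-j : ℕ)):ℝ) = (l:ℝ) + m - j := by
          have : j ≤ l + m := by omega
          push_cast [Nat.cast_sub this]; ring
        push_cast [hcast]
        have hjl' : ((j:ℝ)) - l ≠ 0 := by
          intro hcon
          exact hjl (by exact_mod_cast sub_eq_zero.mp hcon)
        have hlm : ((l:ℝ) + m - j + 1) ≠ 0 := by
          have : (0:ℝ) < (l:ℝ) + m - j + 1 := by
            have : (j:ℝ) ≤ (l:ℝ) + m := by exact_mod_cast (by omega : j ≤ l + m)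
            linarith
          linarith
        field_simp
        ring
    rw [show l + (m+1) + 1 = (l+m+1)+1 from by omega, Finset.sum_range_succ,
      Finset.sum_congr rfl hstep, Finset.sum_add_distrib, ih]
    have hbound : tif l (m+1) (l+m+1)
        = (if (l+m+1) = l then 0 else (-1:ℝ)^((l+m+1)+l) * ((l.factorial : ℝ) * (m.factorial : ℝ)) /
            (((l+m+1).factorial : ℝ) * ((l+m+1-(l+m+1)).factorial : ℝ))) := by
      rw [tif, if_neg (by omega), if_neg (by omega)]
      have h1 : l + (m+1) - (l+m+1) = 0 := by omega
      have h2 : l + m + 1 - (l+m+1) = 0 := by omega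
      rw [h1, h2]
      have h3 : (((l+m+1 : ℕ)):ℝ) - l = (m:ℝ) + 1 := by push_cast; ring
      rw [h3, Nat.factorial_succ m]
      have hm1 : ((m:ℝ)+1) ≠ 0 := by positivity
      push_cast
      field_simp
    rw [hbound]
    have hfull : ∑ j ∈ Finset.range ((l+m+1)+1),
        (if j = l then 0 else (-1:ℝ)^(j+l) * ((l.factorial : ℝ) * (m.factorial : ℝ)) /
          ((j.factorial : ℝ) * ((l+m+1-j).factorial : ℝ))) = -(1/((m:ℝ)+1)) := by
      have split2 : ∀ j ∈ Finset.range ((l+m+1)+1),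
          (if j = l then 0 else (-1:ℝ)^(j+l) * ((l.factorial : ℝ) * (m.factorial : ℝ)) /
            ((j.factorial : ℝ) * ((l+m+1-j).factorial : ℝ)))
          = ((l.factorial : ℝ) * (m.factorial : ℝ) / ((l+m+1).factorial : ℝ)) * ((-1:ℝ)^l *
              ((-1:ℝ)^j * (((l+m+1).choose j : ℕ):ℝ)))
            - (if j = l then 1/((m:ℝ)+1) else 0) := by
        intro j hj
        rw [Finset.mem_range] at hj
        have hjn : j ≤ l+m+1 := by omega
        have hch : (((l+m+1).factorial : ℕ):ℝ)
            = (((l+m+1).choose j : ℕ):ℝ) * ((j.factorial : ℕ):ℝ) * (((l+m+1-j).factorial : ℕ):ℝ) := by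
          exact_mod_cast congrArg (Nat.cast : ℕ → ℝ)
            (Nat.choose_mul_factorial_mul_factorial hjn).symm
        by_cases hjl : j = l
        · subst hjl
          have h2 : j + m + 1 - j = m + 1 := by omega
          rw [if_pos rfl, if_pos rfl, hch, h2, Nat.factorial_succ m]
          have hm1 : ((m:ℝ)+1) ≠ 0 := by positivity
          have hC : (((j+m+1).choose j : ℕ):ℝ) ≠ 0 := by
            exact_mod_cast Nat.cast_ne_zero.mpr (Nat.choose_pos hjn).ne'
          rcases Nat.even_or_odd j with hl | hl <;> rw [hl.neg_one_pow] <;>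
            push_cast <;> field_simp <;> ring
        · rw [if_neg hjl, if_neg hjl, hch, pow_add]
          have hC : (((l+m+1).choose j : ℕ):ℝ) ≠ 0 := by
            exact_mod_cast Nat.cast_ne_zero.mpr (Nat.choose_pos hjn).ne'
          field_simp
          ring
      rw [Finset.sum_congr rfl split2, Finset.sum_sub_distrib, ← Finset.mul_sum,
        ← Finset.mul_sum, alt_sum_real (l+m+1)]
      rw [if_neg (by omega), Finset.sum_ite_eq' (Finset.range ((l+m+1)+1)) l
        (fun _ => 1/((m:ℝ)+1)), if_pos (by simp; omega)]
      ring
    rw [add_assoc, ← Finset.sum_range_succ, hfull, hsum_succ]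
    ring

lemma recip_sum (l r : ℕ) :
    ∑ ν ∈ (Finset.Icc (-(l:ℤ)) (r:ℤ)).erase 0, (1:ℝ)/(ν:ℝ) = hsum r - hsum l := by
  have hsplit : (Finset.Icc (-(l:ℤ)) (r:ℤ)).erase 0
      = Finset.Icc (-(l:ℤ)) (-1) ∪ Finset.Icc 1 (r:ℤ) := by
    ext x
    simp only [Finset.mem_erase, Finset.mem_Icc, Finset.mem_union]
    omega
  have hdisj : Disjoint (Finset.Icc (-(l:ℤ)) (-1)) (Finset.Icc 1 (r:ℤ)) := by
    rw [Finset.disjoint_left]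
    intro x hx hx2
    simp only [Finset.mem_Icc] at hx hx2
    omega
  rw [hsplit, Finset.sum_union hdisj]
  have hneg : Finset.Icc (-(l:ℤ)) (-1)
      = (Finset.range l).map ⟨fun i : ℕ => -(i:ℤ)-1, show Function.Injective _ from fun a b h => by simpa using h⟩ := by
    ext x
    simp only [Finset.mem_Icc, Finset.mem_map, Finset.mem_range, Function.Embedding.coeFn_mk]
    constructor
    · rintro ⟨hx1, hx2⟩
      exact ⟨(-x-1).toNat, by omega, by omega⟩
    · rintro ⟨i, hi, rfl⟩
      omega
  have hpos : Finset.Icc (1:ℤ) (r:ℤ)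
      = (Finset.range r).map ⟨fun i : ℕ => (i:ℤ)+1, show Function.Injective _ from fun a b h => by simpa using h⟩ := by
    ext x
    simp only [Finset.mem_Icc, Finset.mem_map, Finset.mem_range, Function.Embedding.coeFn_mk]
    constructor
    · rintro ⟨hx1, hx2⟩
      exact ⟨(x-1).toNat, by omega, by omega⟩
    · rintro ⟨i, hi, rfl⟩
      omega
  rw [hneg, hpos, Finset.sum_map, Finset.sum_map]
  simp only [Function.Embedding.coeFn_mk]
  have e1 : ∑ i ∈ Finset.range l, (1:ℝ)/((-(i:ℤ)-1 : ℤ):ℝ) = -hsum l := by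
    rw [hsum, ← Finset.sum_neg_distrib]
    refine Finset.sum_congr rfl fun i _ => ?_
    push_cast
    have hi : ((i:ℝ)+1) ≠ 0 := by positivity
    have hi2 : (-(i:ℝ)-1) ≠ 0 := by intro hcon; apply hi; linarith
    field_simp
    ring
  have e2 : ∑ i ∈ Finset.range r, (1:ℝ)/(((i:ℤ)+1 : ℤ):ℝ) = hsum r := by
    rw [hsum]
    refine Finset.sum_congr rfl fun i _ => ?_
    push_cast
    ring
  rw [e1, e2]
  ring

lemma aCoef_sum_zero (l r : ℕ) :
    ∑ k ∈ Finset.Icc (-(l:ℤ)) (r:ℤ), aCoef l r k = 0 := by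
  rw [Icc_eq_map, Finset.sum_map]
  simp only [Function.Embedding.coeFn_mk]
  have hpt : ∀ j ∈ Finset.range (l+r+1), aCoef l r ((j:ℤ)-l)
      = (if j = l then hsum l - hsum r else 0) - tif l r j := by
    intro j hj
    rw [Finset.mem_range] at hj
    by_cases hjl : j = l
    · rw [if_pos hjl, tif, if_pos hjl, sub_zero]
      have hz : ((j:ℤ) - l) = 0 := by omega
      rw [hz, aCoef, if_pos rfl, recip_sum]
      ring
    · rw [if_neg hjl, tif, if_neg hjl, zero_sub]
      have h := aCoef_off l r j (by omega) hjl
      have hjl' : ((j:ℝ)) - l ≠ 0 := fun hcon => hjl (by exact_mod_cast sub_eq_zero.mp hcon)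
      rw [← neg_div, eq_div_iff hjl']
      linear_combination h
  rw [Finset.sum_congr rfl hpt, Finset.sum_sub_distrib, T_eq,
    Finset.sum_ite_eq' (Finset.range (l+r+1)) l (fun _ => hsum l - hsum r),
    if_pos (by simp)]
  ring

lemma lam0_one (l r : ℕ) : lam0 l r 1 = 0 := by
  rw [lam0]
  have h : ∀ k ∈ Finset.Icc (-(l:ℤ)) (r:ℤ), (aCoef l r k : ℂ) * (1:ℂ)^k = (aCoef l r k : ℂ) := by
    intro k _; rw [one_zpow, mul_one]
  rw [Finset.sum_congr rfl h, ← Complex.ofReal_sum, aCoef_sum_zero]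
  simp

lemma hasDerivAt_lam0exp (l r : ℕ) (θ : ℝ) :
    HasDerivAt (fun t : ℝ => lam0 l r (Complex.exp (t * Complex.I)))
      (-Complex.I * (1 - (-1:ℂ)^l * ((l.factorial * r.factorial : ℕ) : ℂ) / ((l+r).factorial : ℂ)
          * (Complex.exp (θ * Complex.I))^(-(l:ℤ)) * (1 - Complex.exp (θ * Complex.I))^(l+r))) θ := by
  set s := Complex.exp (θ * Complex.I) with hsdef
  have hs : s ≠ 0 := Complex.exp_ne_zero _
  have hexp : HasDerivAt (fun t : ℝ => Complex.exp (t * Complex.I)) (s * Complex.I) θ := by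
    have h1 : HasDerivAt (fun z : ℂ => Complex.exp (z * Complex.I))
        (Complex.exp ((θ:ℂ) * Complex.I) * Complex.I) (θ:ℂ) := by
      simpa using ((hasDerivAt_id ((θ:ℂ))).mul_const Complex.I).cexp
    exact h1.comp_ofReal
  have hsum : HasDerivAt (fun t : ℝ => ∑ k ∈ Finset.Icc (-(l:ℤ)) (r:ℤ),
      (aCoef l r k : ℂ) * Complex.exp (t * Complex.I)^k)
      (∑ k ∈ Finset.Icc (-(l:ℤ)) (r:ℤ), (aCoef l r k : ℂ) * ((k:ℂ) * s^(k-1) * (s * Complex.I))) θ := by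
    apply HasDerivAt.fun_sum
    intro k _
    exact (((hasDerivAt_zpow k s (Or.inl hs)).comp θ hexp)).const_mul _
  have hneg := hsum.fun_neg
  have hfun : (fun t : ℝ => -∑ k ∈ Finset.Icc (-(l:ℤ)) (r:ℤ),
      (aCoef l r k : ℂ) * Complex.exp (t * Complex.I)^k)
      = (fun t : ℝ => lam0 l r (Complex.exp (t * Complex.I))) := by
    funext t; rw [lam0]
  rw [hfun] at hneg
  convert hneg using 1
  · rfl
  have hterm : ∀ k ∈ Finset.Icc (-(l:ℤ)) (r:ℤ),
      (aCoef l r k : ℂ) * ((k:ℂ) * s^(k-1) * (s * Complex.I))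
        = Complex.I * ((k:ℂ) * (aCoef l r k : ℂ) * s^k) := by
    intro k _
    rw [zpow_sub_one₀ hs]
    field_simp
  rw [Finset.sum_congr rfl hterm, ← Finset.mul_sum, key_deriv_sum l r s hs]
  ring

lemma half_angle (t : ℝ) : (1:ℂ) - Complex.exp ((t:ℂ) * Complex.I)
    = ((-2 * Real.sin (t/2) : ℝ) : ℂ) * (Complex.I * Complex.exp (((t/2 : ℝ):ℂ) * Complex.I)) := by
  have hs : Real.sin t = 2 * Real.sin (t/2) * Real.cos (t/2) := by
    have h := Real.sin_two_mul (t/2)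
    rw [show 2*(t/2) = t from by ring] at h
    exact h
  have hc : Real.cos t = 1 - 2 * Real.sin (t/2)^2 := by
    have h1 := Real.sin_sq_add_cos_sq (t/2)
    have h2 := Real.cos_two_mul' (t/2)
    rw [show 2*(t/2) = t from by ring] at h2
    linarith
  rw [Complex.exp_mul_I, Complex.exp_mul_I]
  apply Complex.ext <;>
    simp only [Complex.sub_re, Complex.sub_im, Complex.one_re, Complex.one_im,
      Complex.add_re, Complex.add_im, Complex.mul_re, Complex.mul_im,
      Complex.I_re, Complex.I_im, Complex.ofReal_re, Complex.ofReal_im,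
      Complex.cos_ofReal_re, Complex.sin_ofReal_re, Complex.cos_ofReal_im,
      Complex.sin_ofReal_im] <;>
    simp only [hs, hc] <;> ring

lemma deriv_re_eq (l r : ℕ) (hlr : l = r+1 ∨ l = r+2) (t : ℝ) :
    (-Complex.I * (1 - (-1:ℂ)^l * ((l.factorial * r.factorial : ℕ) : ℂ) / ((l+r).factorial : ℂ)
        * (Complex.exp ((t:ℂ) * Complex.I))^(-(l:ℤ)) * (1 - Complex.exp ((t:ℂ) * Complex.I))^(l+r))).re
      = -((((l.factorial * r.factorial : ℕ)):ℝ) / ((((l+r).factorial : ℕ)):ℝ) * 2^(2*l-1))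
          * (Real.sin (t/2)^(2*l-1) * Real.cos (t/2)) := by
  set σ := Real.sin (t/2) with hσ
  rcases hlr with hl | hl
  · subst hl
    have hzpow : (Complex.exp ((t:ℂ)*Complex.I))^(-((r+1:ℕ):ℤ))
        = Complex.exp (((-((r+1:ℕ):ℤ) : ℤ) : ℂ) * ((t:ℂ)*Complex.I)) := (Complex.exp_int_mul _ _).symm
    have hpow : (1 - Complex.exp ((t:ℂ)*Complex.I))^((r+1)+r)
        = (((-2*σ)^((r+1)+r) : ℝ) : ℂ) * (Complex.I^((r+1)+r)
            * Complex.exp ((((r+1)+r : ℕ):ℂ) * (((t/2:ℝ):ℂ) * Complex.I))) := by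
      rw [half_angle, mul_pow, mul_pow, ← Complex.exp_nat_mul, ← Complex.ofReal_pow]
    rw [hzpow, hpow, show (r+1)+r = 2*r+1 from by omega]
    have hI : Complex.I^(2*r+1) = ((-1:ℂ))^r * Complex.I := by
      rw [pow_succ, pow_mul, Complex.I_sq]
    rw [hI]
    set expA := Complex.exp (((-((r+1:ℕ):ℤ) : ℤ) : ℂ) * ((t:ℂ)*Complex.I)) with hA
    set expB := Complex.exp (((2*r+1 : ℕ):ℂ) * (((t/2:ℝ):ℂ) * Complex.I)) with hB
    set expC := Complex.exp ((((-(t/2)) : ℝ):ℂ) * Complex.I) with hC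
    have hmerge : expA * expB = expC := by
      rw [hA, hB, hC, ← Complex.exp_add]
      congr 1
      push_cast
      ring
    have hsgn : (-1:ℂ)^(r+1) * (-1:ℂ)^r = -1 := by
      rw [← pow_add]
      exact Odd.neg_one_pow ⟨r, by omega⟩
    have hoddC : (((-2*σ)^(2*r+1) : ℝ):ℂ) = -(((2:ℝ)^(2*r+1) * σ^(2*r+1) : ℝ) : ℂ) := by
      have h1 : (-2*σ)^(2*r+1) = -((2:ℝ)^(2*r+1) * σ^(2*r+1)) := by
        rw [show ((-2)*σ : ℝ) = -(2*σ) from by ring, Odd.neg_pow ⟨r, by omega⟩, mul_pow]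
      rw [h1]
      push_cast
      ring
    set a : ℝ := ((((r+1).factorial * r.factorial : ℕ)):ℝ) / ((((2*r+1).factorial : ℕ)):ℝ)
        * 2^(2*r+1) * σ^(2*r+1) with ha
    have hX : (-1:ℂ) ^ (r + 1) * (((r + 1).factorial * r.factorial : ℕ) : ℂ)
          / (((2 * r + 1).factorial : ℕ) : ℂ) * expA *
          ((((-2 * σ) ^ (2 * r + 1) : ℝ):ℂ) * ((-1:ℂ) ^ r * Complex.I * expB))
        = (a : ℂ) * (expC * Complex.I) := by
      calc (-1:ℂ) ^ (r + 1) * (((r + 1).factorial * r.factorial : ℕ) : ℂ)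
          / (((2 * r + 1).factorial : ℕ) : ℂ) * expA *
          ((((-2 * σ) ^ (2 * r + 1) : ℝ):ℂ) * ((-1:ℂ) ^ r * Complex.I * expB))
          = ((-1:ℂ)^(r+1) * (-1:ℂ)^r) * ((((r + 1).factorial * r.factorial : ℕ) : ℂ)
              / (((2 * r + 1).factorial : ℕ) : ℂ)) * (((-2 * σ) ^ (2 * r + 1) : ℝ):ℂ)
              * (expA * expB) * Complex.I := by ring
        _ = (-1) * ((((r + 1).factorial * r.factorial : ℕ) : ℂ)
              / (((2 * r + 1).factorial : ℕ) : ℂ)) * (-(((2:ℝ)^(2*r+1) * σ^(2*r+1) : ℝ) : ℂ))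
              * expC * Complex.I := by rw [hsgn, hmerge, hoddC]
        _ = (a : ℂ) * (expC * Complex.I) := by
            rw [ha]
            push_cast
            ring
    rw [hX]
    have hE : -Complex.I * (1 - (a:ℂ) * (expC * Complex.I))
        = -Complex.I - (a:ℂ) * expC := by
      linear_combination ((a:ℂ) * expC) * Complex.I_mul_I
    rw [hE, hC]
    simp only [Complex.sub_re, Complex.neg_re, Complex.I_re, Complex.re_ofReal_mul,
      Complex.exp_ofReal_mul_I_re, Real.cos_neg, neg_zero, zero_sub]
    rw [ha, show 2*(r+1)-1 = 2*r+1 from by omega]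
    ring
  · subst hl
    have hzpow : (Complex.exp ((t:ℂ)*Complex.I))^(-((r+2:ℕ):ℤ))
        = Complex.exp (((-((r+2:ℕ):ℤ) : ℤ) : ℂ) * ((t:ℂ)*Complex.I)) := (Complex.exp_int_mul _ _).symm
    have hpow : (1 - Complex.exp ((t:ℂ)*Complex.I))^((r+2)+r)
        = (((-2*σ)^((r+2)+r) : ℝ) : ℂ) * (Complex.I^((r+2)+r)
            * Complex.exp ((((r+2)+r : ℕ):ℂ) * (((t/2:ℝ):ℂ) * Complex.I))) := by
      rw [half_angle, mul_pow, mul_pow, ← Complex.exp_nat_mul, ← Complex.ofReal_pow]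
    rw [hzpow, hpow, show (r+2)+r = 2*r+2 from by omega]
    have hI : Complex.I^(2*r+2) = ((-1:ℂ))^(r+1) := by
      rw [show 2*r+2 = 2*(r+1) from by omega, pow_mul, Complex.I_sq]
    rw [hI]
    set expA := Complex.exp (((-((r+2:ℕ):ℤ) : ℤ) : ℂ) * ((t:ℂ)*Complex.I)) with hA
    set expB := Complex.exp (((2*r+2 : ℕ):ℂ) * (((t/2:ℝ):ℂ) * Complex.I)) with hB
    set expC := Complex.exp ((((-t) : ℝ):ℂ) * Complex.I) with hC
    have hmerge : expA * expB = expC := by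
      rw [hA, hB, hC, ← Complex.exp_add]
      congr 1
      push_cast
      ring
    have hsgn : (-1:ℂ)^(r+2) * (-1:ℂ)^(r+1) = -1 := by
      rw [← pow_add]
      exact Odd.neg_one_pow ⟨r+1, by omega⟩
    have hevenC : (((-2*σ)^(2*r+2) : ℝ):ℂ) = ((((2:ℝ)^(2*r+2) * σ^(2*r+2) : ℝ)) : ℂ) := by
      have h1 : (-2*σ)^(2*r+2) = ((2:ℝ)^(2*r+2) * σ^(2*r+2)) := by
        rw [show ((-2)*σ : ℝ) = -(2*σ) from by ring, Even.neg_pow ⟨r+1, by omega⟩, mul_pow]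
      rw [h1]
    set a : ℝ := ((((r+2).factorial * r.factorial : ℕ)):ℝ) / ((((2*r+2).factorial : ℕ)):ℝ)
        * 2^(2*r+2) * σ^(2*r+2) with ha
    have hX : (-1:ℂ) ^ (r + 2) * (((r + 2).factorial * r.factorial : ℕ) : ℂ)
          / (((2 * r + 2).factorial : ℕ) : ℂ) * expA *
          ((((-2 * σ) ^ (2 * r + 2) : ℝ):ℂ) * ((-1:ℂ) ^ (r+1) * expB))
        = -((a : ℂ) * expC) := by
      calc (-1:ℂ) ^ (r + 2) * (((r + 2).factorial * r.factorial : ℕ) : ℂ)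
          / (((2 * r + 2).factorial : ℕ) : ℂ) * expA *
          ((((-2 * σ) ^ (2 * r + 2) : ℝ):ℂ) * ((-1:ℂ) ^ (r+1) * expB))
          = ((-1:ℂ)^(r+2) * (-1:ℂ)^(r+1)) * ((((r + 2).factorial * r.factorial : ℕ) : ℂ)
              / (((2 * r + 2).factorial : ℕ) : ℂ)) * (((-2 * σ) ^ (2 * r + 2) : ℝ):ℂ)
              * (expA * expB) := by ring
        _ = (-1) * ((((r + 2).factorial * r.factorial : ℕ) : ℂ)
              / (((2 * r + 2).factorial : ℕ) : ℂ)) * ((((2:ℝ)^(2*r+2) * σ^(2*r+2) : ℝ)) : ℂ)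
              * expC := by rw [hsgn, hmerge, hevenC]
        _ = -((a : ℂ) * expC) := by
            rw [ha]
            push_cast
            ring
    rw [hX]
    have hE : -Complex.I * (1 - -((a:ℂ) * expC))
        = -Complex.I - (a:ℂ) * (Complex.I * expC) := by ring
    rw [hE, hC]
    have hsin : Real.sin t = 2 * σ * Real.cos (t/2) := by
      have h := Real.sin_two_mul (t/2)
      rw [show 2*(t/2) = t from by ring] at h
      rw [hσ, h]
    have hre : (Complex.I * Complex.exp ((((-t):ℝ):ℂ) * Complex.I)).re = Real.sin t := by
      rw [Complex.mul_re, Complex.I_re, Complex.I_im, Complex.exp_ofReal_mul_I_re,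
        Complex.exp_ofReal_mul_I_im, Real.sin_neg]
      ring
    rw [Complex.sub_re, Complex.neg_re, Complex.I_re, Complex.re_ofReal_mul, hre, hsin,
      ha, show 2*(r+2)-1 = 2*r+3 from by omega]
    ring

lemma re_lam0 (l r : ℕ) (hlr : l = r+1 ∨ l = r+2) (θ : ℝ) :
    (lam0 l r (Complex.exp ((θ:ℂ) * Complex.I))).re
      = -((((l.factorial * r.factorial : ℕ)):ℝ) / ((((l+r).factorial : ℕ)):ℝ) * 2^(2*l) / (2*l))
          * Real.sin (θ/2)^(2*l) := by
  have hl1 : 1 ≤ l := by omega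
  set K : ℝ := (((l.factorial * r.factorial : ℕ)):ℝ) / ((((l+r).factorial : ℕ)):ℝ)
      * 2^(2*l) / (2*l) with hK
  have hG : ∀ t : ℝ, HasDerivAt (fun u : ℝ => -K * Real.sin (u/2)^(2*l))
      (-((((l.factorial * r.factorial : ℕ)):ℝ) / ((((l+r).factorial : ℕ)):ℝ) * 2^(2*l-1))
        * (Real.sin (t/2)^(2*l-1) * Real.cos (t/2))) t := by
    intro t
    have h1 : HasDerivAt (fun u : ℝ => u/2) (1/2) t := (hasDerivAt_id t).div_const 2
    have h2 : HasDerivAt (fun u : ℝ => Real.sin (u/2)) (Real.cos (t/2) * (1/2)) t := by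
      have h := (Real.hasDerivAt_sin (t/2)).comp t h1; exact h
    have h4 := (h2.fun_pow (2*l)).const_mul (-K)
    convert h4 using 1
    · rfl
    · rfl
    rw [hK]
    have h2l : ((2*l : ℕ) : ℝ) ≠ 0 := by positivity
    have hp : (2:ℝ)^(2*l) = 2 * 2^(2*l-1) := by
      rw [← pow_succ']
      congr 1
      omega
    field_simp [hp]
    push_cast
    linear_combination (2 * Real.sin (t/2)^(2*l-1) * Real.cos (t/2) * l) * hp
  have hFd : ∀ t : ℝ, HasDerivAt (fun u : ℝ => (lam0 l r (Complex.exp ((u:ℂ) * Complex.I))).re)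
      (-((((l.factorial * r.factorial : ℕ)):ℝ) / ((((l+r).factorial : ℕ)):ℝ) * 2^(2*l-1))
        * (Real.sin (t/2)^(2*l-1) * Real.cos (t/2))) t := by
    intro t
    have hF := hasDerivAt_lam0exp l r t
    have hre := Complex.reCLM.hasFDerivAt.comp_hasDerivAt t hF
    rw [← deriv_re_eq l r hlr t]
    exact hre
  have hdiff : ∀ t : ℝ, HasDerivAt
      (fun u : ℝ => (lam0 l r (Complex.exp ((u:ℂ) * Complex.I))).re
        - (-K * Real.sin (u/2)^(2*l))) 0 t := by
    intro t
    simpa using (hFd t).fun_sub (hG t)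
  have hconst := is_const_of_deriv_eq_zero
    (f := fun u : ℝ => (lam0 l r (Complex.exp ((u:ℂ) * Complex.I))).re
      - (-K * Real.sin (u/2)^(2*l)))
    (fun t => (hdiff t).differentiableAt) (fun t => (hdiff t).deriv) θ 0
  have hzero : (lam0 l r (Complex.exp (((0:ℝ):ℂ) * Complex.I))).re
      - (-K * Real.sin ((0:ℝ)/2)^(2*l)) = 0 := by
    rw [show (((0:ℝ):ℂ) * Complex.I) = 0 from by simp, Complex.exp_zero, lam0_one]
    simp [zero_pow (by omega : 2*l ≠ 0)]
  rw [hzero] at hconst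
  linarith [hconst]

/-- If the stability region of a time-integrator contains a left half-disk
`{z : |z| < ε₀, Re z < 0}`, then combining it with any stable upwind-biased
spatial discretization of the advection equation yields a conditionally stable
method: there is `α₀ > 0` such that `|p(μ·λ₀(e^{iθ}))| ≤ 1` whenever
`α₀·μ < 1`. -/
theorem halfdisk_stability_region_conditionally_stable (l r : ℕ)
    (h1 : r + 1 ≤ l) (h2 : l ≤ r + 2) (p : Polynomial ℂ) (ε₀ : ℝ) (hε : 0 < ε₀)
    (hp : ∀ z : ℂ, ‖z‖ < ε₀ → z.re < 0 → ‖p.eval z‖ ≤ 1) :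
    ∃ α₀ > (0 : ℝ), ∀ μ : ℝ, 0 < μ → α₀ * μ < 1 →
      ∀ θ : ℝ, 0 < θ → θ < 2 * Real.pi →
        ‖p.eval ((μ : ℂ) * lam0 l r (Complex.exp (θ * Complex.I)))‖ ≤ 1 := by
  have hlr : l = r + 1 ∨ l = r + 2 := by omega
  set M : ℝ := (∑ k ∈ Finset.Icc (-(l:ℤ)) (r:ℤ), |aCoef l r k|) + 1 with hM
  have hM1 : 1 ≤ M := by
    rw [hM]
    have : 0 ≤ ∑ k ∈ Finset.Icc (-(l:ℤ)) (r:ℤ), |aCoef l r k| :=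
      Finset.sum_nonneg fun k _ => abs_nonneg _
    linarith
  have hMpos : 0 < M := by linarith
  refine ⟨M / ε₀, by positivity, ?_⟩
  intro μ hμ hcond θ hθ1 hθ2
  have habs : ‖lam0 l r (Complex.exp ((θ:ℂ) * Complex.I))‖ ≤ M - 1 := by
    rw [lam0, norm_neg]
    calc ‖∑ k ∈ Finset.Icc (-(l:ℤ)) (r:ℤ),
          (aCoef l r k : ℂ) * Complex.exp ((θ:ℂ) * Complex.I)^k‖
        ≤ ∑ k ∈ Finset.Icc (-(l:ℤ)) (r:ℤ),
            ‖(aCoef l r k : ℂ) * Complex.exp ((θ:ℂ) * Complex.I)^k‖ :=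
          norm_sum_le _ _
      _ = ∑ k ∈ Finset.Icc (-(l:ℤ)) (r:ℤ), |aCoef l r k| := by
          refine Finset.sum_congr rfl fun k _ => ?_
          rw [norm_mul, norm_zpow, Complex.norm_exp_ofReal_mul_I, one_zpow, mul_one,
            Complex.norm_real, Real.norm_eq_abs]
      _ = M - 1 := by rw [hM]; ring
  have hmul : ‖(μ:ℂ) * lam0 l r (Complex.exp ((θ:ℂ) * Complex.I))‖
      < ε₀ := by
    rw [norm_mul, Complex.norm_real, Real.norm_eq_abs, abs_of_pos hμ]
    have hlt : μ * M < ε₀ := by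
      have := (div_mul_eq_mul_div M ε₀ μ) ▸ hcond
      calc μ * M = M / ε₀ * μ * ε₀ := by field_simp
        _ < 1 * ε₀ := by exact mul_lt_mul_of_pos_right hcond hε
        _ = ε₀ := one_mul _
    calc μ * ‖lam0 l r (Complex.exp ((θ:ℂ) * Complex.I))‖
        ≤ μ * (M-1) := by
          exact mul_le_mul_of_nonneg_left habs (le_of_lt hμ)
      _ < μ * M := by nlinarith
      _ < ε₀ := hlt
  have hre : ((μ:ℂ) * lam0 l r (Complex.exp ((θ:ℂ) * Complex.I))).re < 0 := by
    rw [Complex.re_ofReal_mul, re_lam0 l r hlr θ]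
    have hsin : 0 < Real.sin (θ/2) := by
      apply Real.sin_pos_of_pos_of_lt_pi
      · linarith
      · linarith [Real.pi_pos]
    have hKpos : 0 < (((l.factorial * r.factorial : ℕ)):ℝ)
        / ((((l+r).factorial : ℕ)):ℝ) * 2^(2*l) / (2*l) := by
      have hfl : (0:ℝ) < ((l.factorial * r.factorial : ℕ):ℝ) := by
        exact_mod_cast Nat.mul_pos l.factorial_pos r.factorial_pos
      have hfr : (0:ℝ) < (((l+r).factorial : ℕ):ℝ) := by
        exact_mod_cast (l+r).factorial_pos
      have hl0 : (0:ℝ) < (l:ℝ) := by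
        have : 1 ≤ l := by omega
        exact_mod_cast Nat.pos_of_ne_zero (by omega)
      positivity
    have hpow : 0 < Real.sin (θ/2)^(2*l) := pow_pos hsin _
    nlinarith [mul_pos hμ (mul_pos hKpos hpow)]
  exact hp _ hmul hre
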